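/- arXiv:2009.06070 — 2 statements merged into one kernel-verified Lean document; each statement's English description precedes it below -/
import Mathlib

section
/- Let (f, r) : ℝ → ℝ² be a solution of the reduced system f'' = -(M+mn) f / h(f,r)³, r'' = r₀²a²/r³ - mλ_n/r² - M r/h(f,r)³ with r > 0 everywhere, where h(f,r) = √(r² + ((M+nm)/(mn))² f²), with initial data f(0) = 0, r'(0) = 0. If there exists T > 0 with f(T) = 0 and r'(T) = 0, then f and r are periodic with period 2T; moreover f is odd and r is even. -/
open Real

noncomputable def lambdaN (n : ℕ) : ℝ :=
  (1 / 4) * ∑ k ∈ Finset.Icc 1 (n - 1), 1 / Real.sin (k * Real.pi / n)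

/-! Auxiliary definitions for the first-order system. -/

noncomputable def Ffun (A c x y : ℝ) : ℝ :=
  -(A * x) / Real.sqrt (y ^ 2 + c ^ 2 * x ^ 2) ^ 3

noncomputable def Gfun (B C' D c x y : ℝ) : ℝ :=
  B / y ^ 3 - C' / y ^ 2 - D * y / Real.sqrt (y ^ 2 + c ^ 2 * x ^ 2) ^ 3

noncomputable def vfield (A B C' D c : ℝ) (p : ℝ × ℝ × ℝ × ℝ) : ℝ × ℝ × ℝ × ℝ :=
  (p.2.1, Ffun A c p.1 p.2.2.1, p.2.2.2, Gfun B C' D c p.1 p.2.2.1)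

lemma Ffun_neg (A c x y : ℝ) : Ffun A c (-x) y = -Ffun A c x y := by
  simp [Ffun, neg_sq, mul_neg, neg_div]

lemma Gfun_neg (B C' D c x y : ℝ) : Gfun B C' D c (-x) y = Gfun B C' D c x y := by
  simp [Gfun, neg_sq]

lemma contDiffOn_vfield (A B C' D c : ℝ) :
    ContDiffOn ℝ 1 (vfield A B C' D c) {p : ℝ × ℝ × ℝ × ℝ | 0 < p.2.2.1} := by
  intro p hp
  apply ContDiffAt.contDiffWithinAt
  have hz : (0:ℝ) < p.2.2.1 := hp
  have hx : ContDiffAt ℝ 1 (fun p : ℝ × ℝ × ℝ × ℝ => p.1) p := contDiffAt_fst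
  have hy : ContDiffAt ℝ 1 (fun p : ℝ × ℝ × ℝ × ℝ => p.2.1) p := by fun_prop
  have hzc : ContDiffAt ℝ 1 (fun p : ℝ × ℝ × ℝ × ℝ => p.2.2.1) p := by fun_prop
  have hwc : ContDiffAt ℝ 1 (fun p : ℝ × ℝ × ℝ × ℝ => p.2.2.2) p := by fun_prop
  have hq : ContDiffAt ℝ 1 (fun p : ℝ × ℝ × ℝ × ℝ => p.2.2.1 ^ 2 + c ^ 2 * p.1 ^ 2) p :=
    (hzc.pow 2).add (contDiffAt_const.mul (hx.pow 2))
  have hqpos : 0 < p.2.2.1 ^ 2 + c ^ 2 * p.1 ^ 2 := by positivity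
  have hs : ContDiffAt ℝ 1
      (fun p : ℝ × ℝ × ℝ × ℝ => Real.sqrt (p.2.2.1 ^ 2 + c ^ 2 * p.1 ^ 2)) p :=
    (Real.contDiffAt_sqrt hqpos.ne').comp p hq
  have hsne : Real.sqrt (p.2.2.1 ^ 2 + c ^ 2 * p.1 ^ 2) ≠ 0 :=
    (Real.sqrt_pos.mpr hqpos).ne'
  have hs3 : ContDiffAt ℝ 1
      (fun p : ℝ × ℝ × ℝ × ℝ => Real.sqrt (p.2.2.1 ^ 2 + c ^ 2 * p.1 ^ 2) ^ 3) p := hs.pow 3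
  have hs3ne : Real.sqrt (p.2.2.1 ^ 2 + c ^ 2 * p.1 ^ 2) ^ 3 ≠ 0 := pow_ne_zero _ hsne
  have hF : ContDiffAt ℝ 1
      (fun p : ℝ × ℝ × ℝ × ℝ => Ffun A c p.1 p.2.2.1) p := by
    unfold Ffun
    exact ((contDiffAt_const.mul hx).neg).div hs3 hs3ne
  have hG : ContDiffAt ℝ 1
      (fun p : ℝ × ℝ × ℝ × ℝ => Gfun B C' D c p.1 p.2.2.1) p := by
    unfold Gfun
    refine ((contDiffAt_const.div (hzc.pow 3) (pow_ne_zero _ hz.ne')).sub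
      (contDiffAt_const.div (hzc.pow 2) (pow_ne_zero _ hz.ne'))).sub ?_
    exact (contDiffAt_const.mul hzc).div hs3 hs3ne
  exact hy.prodMk (hF.prodMk (hwc.prodMk hG))

lemma exists_lipschitzOnWith_of_contDiffOn
    {E F : Type*} [NormedAddCommGroup E] [NormedSpace ℝ E]
    [NormedAddCommGroup F] [NormedSpace ℝ F]
    {v : E → F} {U Q : Set E} (hU : IsOpen U) (hv : ContDiffOn ℝ 1 v U)
    (hQ : IsCompact Q) (hconv : Convex ℝ Q) (hQU : Q ⊆ U) :
    ∃ K : NNReal, LipschitzOnWith K v Q := by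
  have hcont : ContinuousOn (fun x => ‖fderiv ℝ v x‖) Q :=
    ((hv.continuousOn_fderiv_of_isOpen hU le_rfl).mono hQU).norm
  obtain ⟨C, hC⟩ := hQ.exists_bound_of_continuousOn hcont
  refine ⟨Real.toNNReal C,
    hconv.lipschitzOnWith_of_nnnorm_fderiv_le
      (fun x hx => (hv.differentiableOn one_ne_zero x (hQU hx)).differentiableAt
        (hU.mem_nhds (hQU hx)))
      (fun x hx => ?_)⟩
  rw [← NNReal.coe_le_coe, Real.coe_toNNReal', coe_nnnorm]
  exact le_trans (le_trans (le_abs_self _) (hC x hx)) (le_max_left _ _)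

/-- Uniqueness for the reduced system. -/
lemma system_uniqueness (A B C' D c : ℝ) (f₁ r₁ f₂ r₂ : ℝ → ℝ)
    (hf₁ : ContDiff ℝ 2 f₁) (hr₁ : ContDiff ℝ 2 r₁)
    (hf₂ : ContDiff ℝ 2 f₂) (hr₂ : ContDiff ℝ 2 r₂)
    (hr₁pos : ∀ t, 0 < r₁ t) (hr₂pos : ∀ t, 0 < r₂ t)
    (ho1 : ∀ t, deriv (deriv f₁) t = Ffun A c (f₁ t) (r₁ t))
    (ho2 : ∀ t, deriv (deriv r₁) t = Gfun B C' D c (f₁ t) (r₁ t))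
    (ho3 : ∀ t, deriv (deriv f₂) t = Ffun A c (f₂ t) (r₂ t))
    (ho4 : ∀ t, deriv (deriv r₂) t = Gfun B C' D c (f₂ t) (r₂ t))
    (t₀ : ℝ) (e1 : f₁ t₀ = f₂ t₀) (e2 : deriv f₁ t₀ = deriv f₂ t₀)
    (e3 : r₁ t₀ = r₂ t₀) (e4 : deriv r₁ t₀ = deriv r₂ t₀) :
    ∀ t, f₁ t = f₂ t ∧ r₁ t = r₂ t := by
  have h2eq : (2 : WithTop ℕ∞) = 1 + 1 := by norm_num
  have hdf₁ : ContDiff ℝ 1 (deriv f₁) := (contDiff_succ_iff_deriv.mp (h2eq ▸ hf₁)).2.2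
  have hdr₁ : ContDiff ℝ 1 (deriv r₁) := (contDiff_succ_iff_deriv.mp (h2eq ▸ hr₁)).2.2
  have hdf₂ : ContDiff ℝ 1 (deriv f₂) := (contDiff_succ_iff_deriv.mp (h2eq ▸ hf₂)).2.2
  have hdr₂ : ContDiff ℝ 1 (deriv r₂) := (contDiff_succ_iff_deriv.mp (h2eq ▸ hr₂)).2.2
  intro t
  set a' : ℝ := min t t₀ - 1 with ha'
  set b' : ℝ := max t t₀ + 1 with hb'
  have hab : a' < b' := by
    have := min_le_max (a := t) (b := t₀); simp only [ha', hb']; linarith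
  have htmem : t ∈ Set.Ioo a' b' := by
    constructor
    · have : min t t₀ ≤ t := min_le_left _ _; simp only [ha']; linarith
    · have : t ≤ max t t₀ := le_max_left _ _; simp only [hb']; linarith
  have ht₀mem : t₀ ∈ Set.Ioo a' b' := by
    constructor
    · have : min t t₀ ≤ t₀ := min_le_right _ _; simp only [ha']; linarith
    · have : t₀ ≤ max t t₀ := le_max_right _ _; simp only [hb']; linarith
  have hIcc : IsCompact (Set.Icc a' b') := isCompact_Icc
  have hne : (Set.Icc a' b').Nonempty := Set.nonempty_Icc.mpr hab.le
  -- bounds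
  obtain ⟨C1, hC1⟩ := hIcc.exists_bound_of_continuousOn hf₁.continuous.continuousOn
  obtain ⟨C2, hC2⟩ := hIcc.exists_bound_of_continuousOn hdf₁.continuous.continuousOn
  obtain ⟨C3, hC3⟩ := hIcc.exists_bound_of_continuousOn hr₁.continuous.continuousOn
  obtain ⟨C4, hC4⟩ := hIcc.exists_bound_of_continuousOn hdr₁.continuous.continuousOn
  obtain ⟨C5, hC5⟩ := hIcc.exists_bound_of_continuousOn hf₂.continuous.continuousOn
  obtain ⟨C6, hC6⟩ := hIcc.exists_bound_of_continuousOn hdf₂.continuous.continuousOn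
  obtain ⟨C7, hC7⟩ := hIcc.exists_bound_of_continuousOn hr₂.continuous.continuousOn
  obtain ⟨C8, hC8⟩ := hIcc.exists_bound_of_continuousOn hdr₂.continuous.continuousOn
  obtain ⟨t1, ht1, hmin1⟩ := hIcc.exists_isMinOn hne hr₁.continuous.continuousOn
  obtain ⟨t2, ht2, hmin2⟩ := hIcc.exists_isMinOn hne hr₂.continuous.continuousOn
  set ε : ℝ := min (r₁ t1) (r₂ t2) with hε
  have hεpos : 0 < ε := lt_min (hr₁pos t1) (hr₂pos t2)
  set C : ℝ := max (max (max C1 C2) (max C3 C4)) (max (max C5 C6) (max C7 C8)) with hCdef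
  set Q : Set (ℝ × ℝ × ℝ × ℝ) :=
    Set.Icc (-C) C ×ˢ (Set.Icc (-C) C ×ˢ (Set.Icc ε C ×ˢ Set.Icc (-C) C)) with hQdef
  have hQcomp : IsCompact Q :=
    isCompact_Icc.prod (isCompact_Icc.prod (isCompact_Icc.prod isCompact_Icc))
  have hQconv : Convex ℝ Q :=
    (convex_Icc _ _).prod ((convex_Icc _ _).prod ((convex_Icc _ _).prod (convex_Icc _ _)))
  have hQU : Q ⊆ {p : ℝ × ℝ × ℝ × ℝ | 0 < p.2.2.1} := by
    rintro ⟨x, y, z, w⟩ ⟨_, _, ⟨hz1, _⟩, _⟩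
    exact lt_of_lt_of_le hεpos hz1
  have hUopen : IsOpen {p : ℝ × ℝ × ℝ × ℝ | 0 < p.2.2.1} :=
    isOpen_lt continuous_const ((continuous_fst.comp continuous_snd).comp continuous_snd)
  obtain ⟨K, hK⟩ := exists_lipschitzOnWith_of_contDiffOn hUopen
    (contDiffOn_vfield A B C' D c) hQcomp hQconv hQU
  -- the solution curves
  set u₁ : ℝ → ℝ × ℝ × ℝ × ℝ := fun s => (f₁ s, deriv f₁ s, r₁ s, deriv r₁ s) with hu₁
  set u₂ : ℝ → ℝ × ℝ × ℝ × ℝ := fun s => (f₂ s, deriv f₂ s, r₂ s, deriv r₂ s) with hu₂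
  have habs : ∀ (g : ℝ → ℝ) (Cg : ℝ), (∀ x ∈ Set.Icc a' b', ‖g x‖ ≤ Cg) →
      ∀ x ∈ Set.Icc a' b', -C ≤ g x ∧ g x ≤ C → True := fun _ _ _ _ _ _ => trivial
  have key : ∀ (g : ℝ → ℝ) (Cg : ℝ), Cg ≤ C → (∀ x ∈ Set.Icc a' b', ‖g x‖ ≤ Cg) →
      ∀ x ∈ Set.Icc a' b', g x ∈ Set.Icc (-C) C := by
    intro g Cg hCg hb x hx
    have := hb x hx
    rw [Real.norm_eq_abs, abs_le] at this
    exact ⟨by linarith [this.1], le_trans this.2 hCg⟩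
  have hC1' : C1 ≤ C := le_trans (le_trans (le_max_left _ _) (le_max_left _ _)) (le_max_left _ _)
  have hC2' : C2 ≤ C := le_trans (le_trans (le_max_right _ _) (le_max_left _ _)) (le_max_left _ _)
  have hC3' : C3 ≤ C := le_trans (le_trans (le_max_left _ _) (le_max_right _ _)) (le_max_left _ _)
  have hC4' : C4 ≤ C := le_trans (le_trans (le_max_right _ _) (le_max_right _ _)) (le_max_left _ _)
  have hC5' : C5 ≤ C := le_trans (le_trans (le_max_left _ _) (le_max_left _ _)) (le_max_right _ _)
  have hC6' : C6 ≤ C := le_trans (le_trans (le_max_right _ _) (le_max_left _ _)) (le_max_right _ _)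
  have hC7' : C7 ≤ C := le_trans (le_trans (le_max_left _ _) (le_max_right _ _)) (le_max_right _ _)
  have hC8' : C8 ≤ C := le_trans (le_trans (le_max_right _ _) (le_max_right _ _)) (le_max_right _ _)
  have hmem₁ : ∀ s ∈ Set.Icc a' b', u₁ s ∈ Q := by
    intro s hs
    refine ⟨key f₁ C1 hC1' hC1 s hs, key (deriv f₁) C2 hC2' hC2 s hs,
      ⟨?_, (key r₁ C3 hC3' hC3 s hs).2⟩, key (deriv r₁) C4 hC4' hC4 s hs⟩
    exact le_trans (min_le_left _ _) (hmin1 hs)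
  have hmem₂ : ∀ s ∈ Set.Icc a' b', u₂ s ∈ Q := by
    intro s hs
    refine ⟨key f₂ C5 hC5' hC5 s hs, key (deriv f₂) C6 hC6' hC6 s hs,
      ⟨?_, (key r₂ C7 hC7' hC7 s hs).2⟩, key (deriv r₂) C8 hC8' hC8 s hs⟩
    exact le_trans (min_le_right _ _) (hmin2 hs)
  have hderiv₁ : ∀ s, HasDerivAt u₁ (vfield A B C' D c (u₁ s)) s := by
    intro s
    have h1 : HasDerivAt f₁ (deriv f₁ s) s :=
      ((hf₁.differentiable (by norm_num)) s).hasDerivAt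
    have h2 : HasDerivAt (deriv f₁) (Ffun A c (f₁ s) (r₁ s)) s := by
      have := ((hdf₁.differentiable one_ne_zero) s).hasDerivAt
      rwa [ho1 s] at this
    have h3 : HasDerivAt r₁ (deriv r₁ s) s :=
      ((hr₁.differentiable (by norm_num)) s).hasDerivAt
    have h4 : HasDerivAt (deriv r₁) (Gfun B C' D c (f₁ s) (r₁ s)) s := by
      have := ((hdr₁.differentiable one_ne_zero) s).hasDerivAt
      rwa [ho2 s] at this
    exact h1.prodMk (h2.prodMk (h3.prodMk h4))
  have hderiv₂ : ∀ s, HasDerivAt u₂ (vfield A B C' D c (u₂ s)) s := by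
    intro s
    have h1 : HasDerivAt f₂ (deriv f₂ s) s :=
      ((hf₂.differentiable (by norm_num)) s).hasDerivAt
    have h2 : HasDerivAt (deriv f₂) (Ffun A c (f₂ s) (r₂ s)) s := by
      have := ((hdf₂.differentiable one_ne_zero) s).hasDerivAt
      rwa [ho3 s] at this
    have h3 : HasDerivAt r₂ (deriv r₂ s) s :=
      ((hr₂.differentiable (by norm_num)) s).hasDerivAt
    have h4 : HasDerivAt (deriv r₂) (Gfun B C' D c (f₂ s) (r₂ s)) s := by
      have := ((hdr₂.differentiable one_ne_zero) s).hasDerivAt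
      rwa [ho4 s] at this
    exact h1.prodMk (h2.prodMk (h3.prodMk h4))
  have heq0 : u₁ t₀ = u₂ t₀ := by
    simp only [hu₁, hu₂, e1, e2, e3, e4]
  have hEq : Set.EqOn u₁ u₂ (Set.Ioo a' b') :=
    ODE_solution_unique_of_mem_Ioo (v := fun _ => vfield A B C' D c) (s := fun _ => Q)
      (K := K) (fun _ _ => hK) ht₀mem
      (fun s hs => ⟨hderiv₁ s, hmem₁ s (Set.Ioo_subset_Icc_self hs)⟩)
      (fun s hs => ⟨hderiv₂ s, hmem₂ s (Set.Ioo_subset_Icc_self hs)⟩) heq0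
  have := hEq htmem
  exact ⟨congrArg Prod.fst this, congrArg (fun p => p.2.2.1) this⟩

lemma reflected_deriv (f : ℝ → ℝ) (c₀ t : ℝ) :
    deriv (fun t => -f (c₀ - t)) t = deriv f (c₀ - t) := by
  calc deriv (fun t => -f (c₀ - t)) t = -deriv (fun t => f (c₀ - t)) t := deriv.neg
  _ = -(-deriv f (c₀ - t)) := by rw [deriv_comp_const_sub]
  _ = deriv f (c₀ - t) := neg_neg _

lemma reflected_solution (A B C' D c : ℝ) (f r : ℝ → ℝ)
    (hf : ContDiff ℝ 2 f) (hr : ContDiff ℝ 2 r)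
    (ho1 : ∀ t, deriv (deriv f) t = Ffun A c (f t) (r t))
    (ho2 : ∀ t, deriv (deriv r) t = Gfun B C' D c (f t) (r t)) (c₀ : ℝ) :
    ContDiff ℝ 2 (fun t => -f (c₀ - t)) ∧ ContDiff ℝ 2 (fun t => r (c₀ - t)) ∧
    (∀ t, deriv (fun t => -f (c₀ - t)) t = deriv f (c₀ - t)) ∧
    (∀ t, deriv (fun t => r (c₀ - t)) t = -deriv r (c₀ - t)) ∧
    (∀ t, deriv (deriv (fun t => -f (c₀ - t))) t =
      Ffun A c ((fun t => -f (c₀ - t)) t) ((fun t => r (c₀ - t)) t)) ∧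
    (∀ t, deriv (deriv (fun t => r (c₀ - t))) t =
      Gfun B C' D c ((fun t => -f (c₀ - t)) t) ((fun t => r (c₀ - t)) t)) := by
  have hsub : ContDiff ℝ 2 (fun t : ℝ => c₀ - t) := contDiff_const.sub contDiff_id
  have hg : ContDiff ℝ 2 (fun t => -f (c₀ - t)) := (hf.comp hsub).neg
  have hs : ContDiff ℝ 2 (fun t => r (c₀ - t)) := hr.comp hsub
  have hdg : ∀ t, deriv (fun t => -f (c₀ - t)) t = deriv f (c₀ - t) :=
    reflected_deriv f c₀
  have hds : ∀ t, deriv (fun t => r (c₀ - t)) t = -deriv r (c₀ - t) :=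
    fun t => deriv_comp_const_sub r c₀ t
  refine ⟨hg, hs, hdg, hds, ?_, ?_⟩
  · intro t
    rw [funext hdg, deriv_comp_const_sub, ho1 (c₀ - t)]
    exact (Ffun_neg A c (f (c₀ - t)) (r (c₀ - t))).symm
  · intro t
    rw [funext hds]
    calc deriv (fun t => -deriv r (c₀ - t)) t
        = -deriv (fun t => deriv r (c₀ - t)) t := deriv.neg
      _ = -(-deriv (deriv r) (c₀ - t)) := by rw [deriv_comp_const_sub]
      _ = deriv (deriv r) (c₀ - t) := neg_neg _
      _ = Gfun B C' D c (f (c₀ - t)) (r (c₀ - t)) := ho2 (c₀ - t)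
      _ = _ := (Gfun_neg B C' D c (f (c₀ - t)) (r (c₀ - t))).symm

theorem odd_symmetry_periodic (M m r₀ a : ℝ) (n : ℕ) (hM : 0 ≤ M) (hm : 0 < m)
    (hr₀ : 0 < r₀) (hn : 2 ≤ n) (f r : ℝ → ℝ)
    (hf : ContDiff ℝ 2 f) (hr : ContDiff ℝ 2 r) (hrpos : ∀ t, 0 < r t)
    (hfode : ∀ t, deriv (deriv f) t =
      -((M + m * n) * f t) /
        (Real.sqrt ((r t) ^ 2 + ((M + n * m) / (m * n)) ^ 2 * (f t) ^ 2)) ^ 3)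
    (hrode : ∀ t, deriv (deriv r) t =
      r₀ ^ 2 * a ^ 2 / (r t) ^ 3 - m * lambdaN n / (r t) ^ 2 -
        M * r t /
          (Real.sqrt ((r t) ^ 2 + ((M + n * m) / (m * n)) ^ 2 * (f t) ^ 2)) ^ 3)
    (hf0 : f 0 = 0) (hr'0 : deriv r 0 = 0)
    (T : ℝ) (hT : 0 < T) (hfT : f T = 0) (hr'T : deriv r T = 0) :
    Function.Periodic f (2 * T) ∧ Function.Periodic r (2 * T) ∧
      (∀ t, f (-t) = -f t) ∧ (∀ t, r (-t) = r t) := by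
  have ho1 : ∀ t, deriv (deriv f) t =
      Ffun (M + m * n) ((M + n * m) / (m * n)) (f t) (r t) := by
    intro t; rw [hfode t]; simp only [Ffun]
  have ho2 : ∀ t, deriv (deriv r) t =
      Gfun (r₀ ^ 2 * a ^ 2) (m * lambdaN n) M ((M + n * m) / (m * n)) (f t) (r t) := by
    intro t; rw [hrode t]; simp only [Gfun]
  -- reflection at 0
  obtain ⟨hg1, hs1, hdg1, hds1, hog1, hos1⟩ :=
    reflected_solution (M + m * n) (r₀ ^ 2 * a ^ 2) (m * lambdaN n) M
      ((M + n * m) / (m * n)) f r hf hr ho1 ho2 0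
  have h1 := system_uniqueness (M + m * n) (r₀ ^ 2 * a ^ 2) (m * lambdaN n) M
      ((M + n * m) / (m * n)) f r (fun t => -f (0 - t)) (fun t => r (0 - t))
      hf hr hg1 hs1 hrpos (fun t => hrpos (0 - t)) ho1 ho2 hog1 hos1 0
      (by show f 0 = -f (0 - 0); simp [hf0]) (by rw [hdg1 0]; norm_num)
      (by show r 0 = r (0 - 0); norm_num) (by rw [hds1 0]; simp [hr'0])
  -- reflection at 2T
  obtain ⟨hg2, hs2, hdg2, hds2, hog2, hos2⟩ :=
    reflected_solution (M + m * n) (r₀ ^ 2 * a ^ 2) (m * lambdaN n) M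
      ((M + n * m) / (m * n)) f r hf hr ho1 ho2 (2 * T)
  have h2 := system_uniqueness (M + m * n) (r₀ ^ 2 * a ^ 2) (m * lambdaN n) M
      ((M + n * m) / (m * n)) f r (fun t => -f (2 * T - t)) (fun t => r (2 * T - t))
      hf hr hg2 hs2 hrpos (fun t => hrpos (2 * T - t)) ho1 ho2 hog2 hos2 T
      (by show f T = -f (2 * T - T); rw [show (2 : ℝ) * T - T = T by ring]; simp [hfT])
      (by rw [hdg2 T, show (2 : ℝ) * T - T = T by ring])
      (by show r T = r (2 * T - T); rw [show (2 : ℝ) * T - T = T by ring])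
      (by rw [hds2 T, show (2 : ℝ) * T - T = T by ring, hr'T]; norm_num)
  have hodd : ∀ t, f (-t) = -f t := by
    intro t
    have := (h1 t).1
    simp only [zero_sub] at this
    linarith
  have heven : ∀ t, r (-t) = r t := by
    intro t
    have := (h1 t).2
    simp only [zero_sub] at this
    exact this.symm
  refine ⟨?_, ?_, hodd, heven⟩
  · intro x
    have h := (h2 (-x)).1
    simp only [show (2 : ℝ) * T - -x = x + 2 * T by ring] at h
    rw [hodd x] at h
    exact (neg_inj.mp h).symm
  · intro x
    have h := (h2 (-x)).2
    simp only [show (2 : ℝ) * T - -x = x + 2 * T by ring] at h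
    rw [heven x] at h
    exact h.symm
end

section
/- Let (f, r) : ℝ → ℝ² be a solution of the reduced system f'' = -(M+mn) f / h(f,r)³, r'' = r₀²a²/r³ - mλ_n/r² - M r/h(f,r)³ with r > 0 everywhere, where h(f,r) = √(r² + ((M+nm)/(mn))² f²), with initial data f(0) = 0 and r'(0) = 0. If there exists T > 0 with f'(T) = 0 and r'(T) = 0, then f and r are periodic with period 4T. -/
open Real

open Set Filter Topology in
/-- Global uniqueness for autonomous ODEs whose field is `C¹` along the trajectory,
via a clopen argument. -/
theorem my_ode_unique {E : Type*} [NormedAddCommGroup E] [NormedSpace ℝ E] (F : E → E)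
    (c c' : ℝ → E) (hc : ∀ t, HasDerivAt c (F (c t)) t) (hc' : ∀ t, HasDerivAt c' (F (c' t)) t)
    (hF : ∀ t, ContDiffAt ℝ 1 F (c t)) (t₀ : ℝ) (h0 : c t₀ = c' t₀) : ∀ t, c t = c' t := by
  have hcont : Continuous c := continuous_iff_continuousAt.2 fun t => (hc t).continuousAt
  have hcont' : Continuous c' := continuous_iff_continuousAt.2 fun t => (hc' t).continuousAt
  have hA_closed : IsClosed {t | c t = c' t} := isClosed_eq hcont hcont'
  have hA_open : IsOpen {t | c t = c' t} := by
    rw [isOpen_iff_mem_nhds]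
    intro t₁ ht₁
    obtain ⟨K, s, hs, hlip⟩ := (hF t₁).exists_lipschitzOnWith
    have h1 : ∀ᶠ t in 𝓝 t₁, HasDerivAt c (F (c t)) t ∧ c t ∈ s := by
      filter_upwards [hcont.continuousAt.preimage_mem_nhds hs] with t ht using ⟨hc t, ht⟩
    have h2 : ∀ᶠ t in 𝓝 t₁, HasDerivAt c' (F (c' t)) t ∧ c' t ∈ s := by
      have : s ∈ 𝓝 (c' t₁) := ht₁ ▸ hs
      filter_upwards [hcont'.continuousAt.preimage_mem_nhds this] with t ht using ⟨hc' t, ht⟩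
    exact ODE_solution_unique_of_eventually (v := fun _ => F) (s := fun _ => s) (Filter.Eventually.of_forall fun _ => hlip) h1 h2 ht₁
  have huniv : {t | c t = c' t} = univ :=
    IsClopen.eq_univ ⟨hA_closed, hA_open⟩ ⟨t₀, h0⟩
  intro t
  have ht : t ∈ ({t | c t = c' t} : Set ℝ) := huniv.symm ▸ mem_univ t
  exact ht

/-- The first-order vector field associated to the reduced system. -/
noncomputable def myF (M m r₀ a mu C1 lam : ℝ) : ℝ×ℝ×ℝ×ℝ → ℝ×ℝ×ℝ×ℝ := fun x =>
  (x.2.1, -(C1 * x.1) / (Real.sqrt (x.2.2.1 ^ 2 + mu ^ 2 * x.1 ^ 2)) ^ 3,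
   (x.2.2.2,
   r₀ ^ 2 * a ^ 2 / x.2.2.1 ^ 3 - m * lam / x.2.2.1 ^ 2 -
     M * x.2.2.1 / (Real.sqrt (x.2.2.1 ^ 2 + mu ^ 2 * x.1 ^ 2)) ^ 3))

theorem myF_smooth (M m r₀ a mu C1 lam : ℝ) (x : ℝ×ℝ×ℝ×ℝ) (hx : 0 < x.2.2.1) :
    ContDiffAt ℝ 1 (myF M m r₀ a mu C1 lam) x := by
  have hbase : ContDiff ℝ 1 (fun x : ℝ×ℝ×ℝ×ℝ => x.2.2.1 ^ 2 + mu ^ 2 * x.1 ^ 2) := by fun_prop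
  have hpos : 0 < x.2.2.1 ^ 2 + mu ^ 2 * x.1 ^ 2 := by positivity
  have hsq : ContDiffAt ℝ 1 (fun x : ℝ×ℝ×ℝ×ℝ => Real.sqrt (x.2.2.1 ^ 2 + mu ^ 2 * x.1 ^ 2)) x :=
    hbase.contDiffAt.sqrt hpos.ne'
  have hq : ContDiffAt ℝ 1
      (fun x : ℝ×ℝ×ℝ×ℝ => (Real.sqrt (x.2.2.1 ^ 2 + mu ^ 2 * x.1 ^ 2)) ^ 3) x := hsq.pow 3
  have hqne : (Real.sqrt (x.2.2.1 ^ 2 + mu ^ 2 * x.1 ^ 2)) ^ 3 ≠ 0 := by positivity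
  have h1 : ContDiffAt ℝ 1 (fun x : ℝ×ℝ×ℝ×ℝ => x.2.1) x := by fun_prop
  have h3 : ContDiffAt ℝ 1 (fun x : ℝ×ℝ×ℝ×ℝ => x.2.2.2) x := by fun_prop
  have h2 : ContDiffAt ℝ 1
      (fun x : ℝ×ℝ×ℝ×ℝ =>
        -(C1 * x.1) / (Real.sqrt (x.2.2.1 ^ 2 + mu ^ 2 * x.1 ^ 2)) ^ 3) x :=
    ContDiffAt.div (by fun_prop) hq hqne
  have h4 : ContDiffAt ℝ 1
      (fun x : ℝ×ℝ×ℝ×ℝ => r₀ ^ 2 * a ^ 2 / x.2.2.1 ^ 3 - m * lam / x.2.2.1 ^ 2 -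
        M * x.2.2.1 / (Real.sqrt (x.2.2.1 ^ 2 + mu ^ 2 * x.1 ^ 2)) ^ 3) x := by
    have ha : ContDiffAt ℝ 1 (fun x : ℝ×ℝ×ℝ×ℝ => r₀ ^ 2 * a ^ 2 / x.2.2.1 ^ 3) x :=
      ContDiffAt.div (by fun_prop) (by fun_prop) (by positivity)
    have hb : ContDiffAt ℝ 1 (fun x : ℝ×ℝ×ℝ×ℝ => m * lam / x.2.2.1 ^ 2) x :=
      ContDiffAt.div (by fun_prop) (by fun_prop) (by positivity)
    have hcc : ContDiffAt ℝ 1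
        (fun x : ℝ×ℝ×ℝ×ℝ =>
          M * x.2.2.1 / (Real.sqrt (x.2.2.1 ^ 2 + mu ^ 2 * x.1 ^ 2)) ^ 3) x :=
      ContDiffAt.div (by fun_prop) hq hqne
    exact (ha.sub hb).sub hcc
  exact h1.prodMk (h2.prodMk (h3.prodMk h4))

theorem odd_even_symmetry_periodic (M m r₀ a : ℝ) (n : ℕ) (hM : 0 ≤ M) (hm : 0 < m)
    (hr₀ : 0 < r₀) (hn : 2 ≤ n) (f r : ℝ → ℝ)
    (hf : ContDiff ℝ 2 f) (hr : ContDiff ℝ 2 r) (hrpos : ∀ t, 0 < r t)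
    (hfode : ∀ t, deriv (deriv f) t =
      -((M + m * n) * f t) /
        (Real.sqrt ((r t) ^ 2 + ((M + n * m) / (m * n)) ^ 2 * (f t) ^ 2)) ^ 3)
    (hrode : ∀ t, deriv (deriv r) t =
      r₀ ^ 2 * a ^ 2 / (r t) ^ 3 - m * lambdaN n / (r t) ^ 2 -
        M * r t /
          (Real.sqrt ((r t) ^ 2 + ((M + n * m) / (m * n)) ^ 2 * (f t) ^ 2)) ^ 3)
    (hf0 : f 0 = 0) (hr'0 : deriv r 0 = 0)
    (T : ℝ) (hT : 0 < T) (hf'T : deriv f T = 0) (hr'T : deriv r T = 0) :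
    Function.Periodic f (4 * T) ∧ Function.Periodic r (4 * T) := by
  have hf2 : ContDiff ℝ (1 + 1) f := by exact_mod_cast hf
  have hr2 : ContDiff ℝ (1 + 1) r := by exact_mod_cast hr
  have hfdiff : Differentiable ℝ f := hf.differentiable (by norm_num)
  have hrdiff : Differentiable ℝ r := hr.differentiable (by norm_num)
  have hf'diff : Differentiable ℝ (deriv f) :=
    (contDiff_succ_iff_deriv.mp hf2).2.2.differentiable (by norm_num)
  have hr'diff : Differentiable ℝ (deriv r) :=
    (contDiff_succ_iff_deriv.mp hr2).2.2.differentiable (by norm_num)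
  set F := myF M m r₀ a ((M + n * m) / (m * n)) (M + m * n) (lambdaN n) with hFdef
  -- the base curve
  have hc : ∀ t, HasDerivAt (fun t => (f t, deriv f t, (r t, deriv r t)))
      (F (f t, deriv f t, (r t, deriv r t))) t := by
    intro t
    have e1 : HasDerivAt f (deriv f t) t := (hfdiff t).hasDerivAt
    have e2 : HasDerivAt (deriv f) (deriv (deriv f) t) t := (hf'diff t).hasDerivAt
    have e3 : HasDerivAt r (deriv r t) t := (hrdiff t).hasDerivAt
    have e4 : HasDerivAt (deriv r) (deriv (deriv r) t) t := (hr'diff t).hasDerivAt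
    have h := e1.prodMk (e2.prodMk (e3.prodMk e4))
    convert h using 1
    simp only [hFdef, myF, Prod.mk.injEq]
    exact ⟨trivial, (hfode t).symm, trivial, (hrode t).symm⟩
  -- the time-reversed, f-negated curve
  have hc₁ : ∀ t, HasDerivAt (fun t => (-(f (-t)), deriv f (-t), (r (-t), -(deriv r (-t)))))
      (F (-(f (-t)), deriv f (-t), (r (-t), -(deriv r (-t))))) t := by
    intro t
    have e1 : HasDerivAt (fun t : ℝ => -(f (-t))) (deriv f (-t)) t := by
      simpa [Function.comp_def, Pi.neg_def] using ((hfdiff (-t)).hasDerivAt.comp t (hasDerivAt_neg t)).neg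
    have e2 : HasDerivAt (fun t : ℝ => deriv f (-t)) (-(deriv (deriv f) (-t))) t := by
      simpa [Function.comp_def] using (hf'diff (-t)).hasDerivAt.comp t (hasDerivAt_neg t)
    have e3 : HasDerivAt (fun t : ℝ => r (-t)) (-(deriv r (-t))) t := by
      simpa [Function.comp_def] using (hrdiff (-t)).hasDerivAt.comp t (hasDerivAt_neg t)
    have e4 : HasDerivAt (fun t : ℝ => -(deriv r (-t))) (deriv (deriv r) (-t)) t := by
      simpa [Function.comp_def, Pi.neg_def] using ((hr'diff (-t)).hasDerivAt.comp t (hasDerivAt_neg t)).neg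
    have h := e1.prodMk (e2.prodMk (e3.prodMk e4))
    convert h using 1
    simp only [hFdef, myF, Prod.mk.injEq]
    refine ⟨trivial, ?_, trivial, ?_⟩
    · rw [neg_sq, hfode]; ring
    · rw [neg_sq, hrode]
  -- the curve reflected about T
  have h2T : ∀ t : ℝ, HasDerivAt (fun t : ℝ => 2 * T - t) (-1) t := by
    intro t
    simpa using (hasDerivAt_id t).const_sub (2 * T)
  have hc₂ : ∀ t, HasDerivAt
      (fun t => (f (2 * T - t), -(deriv f (2 * T - t)),
        (r (2 * T - t), -(deriv r (2 * T - t)))))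
      (F (f (2 * T - t), -(deriv f (2 * T - t)),
        (r (2 * T - t), -(deriv r (2 * T - t))))) t := by
    intro t
    have e1 : HasDerivAt (fun t : ℝ => f (2 * T - t)) (-(deriv f (2 * T - t))) t := by
      simpa [Function.comp_def] using (hfdiff (2 * T - t)).hasDerivAt.comp t (h2T t)
    have e2 : HasDerivAt (fun t : ℝ => -(deriv f (2 * T - t)))
        (deriv (deriv f) (2 * T - t)) t := by
      simpa [Function.comp_def, Pi.neg_def] using ((hf'diff (2 * T - t)).hasDerivAt.comp t (h2T t)).neg
    have e3 : HasDerivAt (fun t : ℝ => r (2 * T - t)) (-(deriv r (2 * T - t))) t := by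
      simpa [Function.comp_def] using (hrdiff (2 * T - t)).hasDerivAt.comp t (h2T t)
    have e4 : HasDerivAt (fun t : ℝ => -(deriv r (2 * T - t)))
        (deriv (deriv r) (2 * T - t)) t := by
      simpa [Function.comp_def, Pi.neg_def] using ((hr'diff (2 * T - t)).hasDerivAt.comp t (h2T t)).neg
    have h := e1.prodMk (e2.prodMk (e3.prodMk e4))
    convert h using 1
    simp only [hFdef, myF, Prod.mk.injEq]
    exact ⟨trivial, (hfode _).symm, trivial, (hrode _).symm⟩
  -- smoothness of the field along the base curve
  have hFsm : ∀ t, ContDiffAt ℝ 1 F (f t, deriv f t, (r t, deriv r t)) := fun t =>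
    myF_smooth M m r₀ a _ _ _ _ (hrpos t)
  -- odd symmetry about 0
  have hodd := my_ode_unique F _ _ hc hc₁ hFsm 0 (by simp [hf0, hr'0])
  -- even symmetry about T
  have heven := my_ode_unique F _ _ hc hc₂ hFsm T (by
    have h1 : 2 * T - T = T := by ring
    simp [h1, hf'T, hr'T])
  have hfo : ∀ t, f t = -(f (-t)) := fun t => congrArg Prod.fst (hodd t)
  have hro : ∀ t, r t = r (-t) := fun t => congrArg (fun x => x.2.2.1) (hodd t)
  have hfe : ∀ t, f t = f (2 * T - t) := fun t => congrArg Prod.fst (heven t)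
  have hre : ∀ t, r t = r (2 * T - t) := fun t => congrArg (fun x => x.2.2.1) (heven t)
  constructor
  · intro t
    have e1 := hfe (t + 4 * T)
    have a1 : 2 * T - (t + 4 * T) = -(2 * T + t) := by ring
    rw [a1] at e1
    have e2 := hfo (2 * T + t)
    have e3 := hfe (-t)
    have a2 : 2 * T - -t = 2 * T + t := by ring
    rw [a2] at e3
    have e4 := hfo t
    -- f(t+4T) = f(-(2T+t)); f(2T+t) = -(f(-(2T+t))); f(-t) = f(2T+t); f t = -(f(-t))
    linarith
  · intro t
    have e1 := hre (t + 4 * T)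
    have a1 : 2 * T - (t + 4 * T) = -(2 * T + t) := by ring
    rw [a1] at e1
    have e2 := hro (2 * T + t)
    have e3 := hre (-t)
    have a2 : 2 * T - -t = 2 * T + t := by ring
    rw [a2] at e3
    have e4 := hro t
    linarith
end
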